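/- For any *-term P ∧❛ Q (with P a *-term and Q in the category P^d), se(P ∧❛ Q) has the unique conjunction decomposition (se(P)[T↦△], se(Q)) and no disjunction decomposition. For any *-term P ∨❛ Q (with P a *-term and Q in the category P^c), se(P ∨❛ Q) has no conjunction decomposition and its unique disjunction decomposition is (se(P)[F↦△], se(Q)). -/
import Mathlib


/-- Evaluation trees over a set `A` of atoms, with leaves `T` and `F`. -/
inductive ETree (A : Type) : Type
  | leafT : ETree A
  | leafF : ETree A
  | node : ETree A → A → ETree A → ETree A

namespace ETree

/-- Leaf replacement `X[T↦Y, F↦Z]`. -/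
def repl {A : Type} : ETree A → ETree A → ETree A → ETree A
  | leafT, y, _ => y
  | leafF, _, z => z
  | node l a r, y, z => node (repl l y z) a (repl r y z)

end ETree

namespace ETree

/-- The tree contains the leaf `T`. -/
def hasT {A : Type} : ETree A → Prop
  | leafT => True
  | leafF => False
  | node l _ r => hasT l ∨ hasT r

/-- The tree contains the leaf `F`. -/
def hasF {A : Type} : ETree A → Prop
  | leafT => False
  | leafF => True
  | node l _ r => hasF l ∨ hasF r

end ETree

namespace ETree

/-- Depth of an evaluation tree. -/
def depth {A : Type} : ETree A → ℕ
  | leafT => 0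
  | leafF => 0
  | node l _ r => 1 + max (depth l) (depth r)

end ETree

/-- Closed sequential propositional statements over `A`:
`P ::= a | T | F | ¬P | P ∧❛ P | P ∨❛ P`. -/
inductive STerm (A : Type) : Type
  | atom : A → STerm A
  | tt : STerm A
  | ff : STerm A
  | neg : STerm A → STerm A
  | and : STerm A → STerm A → STerm A
  | or : STerm A → STerm A → STerm A

/-- The short-circuit evaluation function `se : S_A → T_A`. -/
def se {A : Type} : STerm A → ETree A
  | .tt => .leafT
  | .ff => .leafF
  | .atom a => .node .leafT a .leafF
  | .neg P => (se P).repl .leafF .leafT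
  | .and P Q => (se P).repl (se Q) .leafF
  | .or P Q => (se P).repl .leafT (se Q)

/-- T-terms: `P^T ::= T | (a ∧❛ P^T) ∨❛ P^T`. -/
inductive IsTTerm {A : Type} : STerm A → Prop
  | tt : IsTTerm .tt
  | node (a : A) {P Q} : IsTTerm P → IsTTerm Q → IsTTerm (.or (.and (.atom a) P) Q)

/-- F-terms: `P^F ::= F | (a ∨❛ P^F) ∧❛ P^F`. -/
inductive IsFTerm {A : Type} : STerm A → Prop
  | ff : IsFTerm .ff
  | node (a : A) {P Q} : IsFTerm P → IsFTerm Q → IsFTerm (.and (.or (.atom a) P) Q)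

/-- ℓ-terms: `P^ℓ ::= (a ∧❛ P^T) ∨❛ P^F | (¬a ∧❛ P^T) ∨❛ P^F`. -/
inductive IsLTerm {A : Type} : STerm A → Prop
  | pos (a : A) {P Q} : IsTTerm P → IsFTerm Q → IsLTerm (.or (.and (.atom a) P) Q)
  | neg (a : A) {P Q} : IsTTerm P → IsFTerm Q → IsLTerm (.or (.and (.neg (.atom a)) P) Q)

mutual
/-- The category `P^c ::= P^ℓ | P^* ∧❛ P^d`. -/
inductive IsCTerm {A : Type} : STerm A → Prop
  | ell {P} : IsLTerm P → IsCTerm P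
  | and {P Q} : IsStarTerm P → IsDTerm Q → IsCTerm (.and P Q)

/-- The category `P^d ::= P^ℓ | P^* ∨❛ P^c`. -/
inductive IsDTerm {A : Type} : STerm A → Prop
  | ell {P} : IsLTerm P → IsDTerm P
  | or {P Q} : IsStarTerm P → IsCTerm Q → IsDTerm (.or P Q)

/-- *-terms: `P^* ::= P^c | P^d`. -/
inductive IsStarTerm {A : Type} : STerm A → Prop
  | c {P} : IsCTerm P → IsStarTerm P
  | d {P} : IsDTerm P → IsStarTerm P
end

/-- Binary trees over `A` with leaves in `{T, F, △}`. -/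
inductive DTree (A : Type) : Type
  | leafT : DTree A
  | leafF : DTree A
  | leafD : DTree A
  | node : DTree A → A → DTree A → DTree A

namespace DTree

/-- `X[△↦Z]`: replace every `△`-leaf of `X` by the evaluation tree `Z`. -/
def substD {A : Type} : DTree A → ETree A → ETree A
  | leafT, _ => .leafT
  | leafF, _ => .leafF
  | leafD, z => z
  | node l a r, z => .node (substD l z) a (substD r z)

/-- The tree contains the leaf `T`. -/
def hasT {A : Type} : DTree A → Prop
  | leafT => True
  | leafF => False
  | leafD => False
  | node l _ r => hasT l ∨ hasT r

/-- The tree contains the leaf `F`. -/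
def hasF {A : Type} : DTree A → Prop
  | leafT => False
  | leafF => True
  | leafD => False
  | node l _ r => hasF l ∨ hasF r

/-- The tree contains the leaf `△`. -/
def hasD {A : Type} : DTree A → Prop
  | leafT => False
  | leafF => False
  | leafD => True
  | node l _ r => hasD l ∨ hasD r

end DTree

namespace ETree

/-- `X[T↦△]`: replace every `T`-leaf by `△`. -/
def replTD {A : Type} : ETree A → DTree A
  | leafT => .leafD
  | leafF => .leafF
  | node l a r => .node (replTD l) a (replTD r)

/-- `X[F↦△]`: replace every `F`-leaf by `△`. -/
def replFD {A : Type} : ETree A → DTree A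
  | leafT => .leafT
  | leafF => .leafD
  | node l a r => .node (replFD l) a (replFD r)

end ETree

/-- `(Y, Z)` is a candidate conjunction decomposition (ccd) of `X`. -/
def IsCCD {A : Type} (Y : DTree A) (Z : ETree A) (X : ETree A) : Prop :=
  X = Y.substD Z ∧ Y.hasD ∧ Y.hasF ∧ ¬ Y.hasT ∧ Z.hasT ∧ Z.hasF

/-- `(Y, Z)` is a candidate disjunction decomposition (cdd) of `X`. -/
def IsCDD {A : Type} (Y : DTree A) (Z : ETree A) (X : ETree A) : Prop :=
  X = Y.substD Z ∧ Y.hasD ∧ Y.hasT ∧ ¬ Y.hasF ∧ Z.hasT ∧ Z.hasF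

/-- `(Y, Z)` is a conjunction decomposition (cd) of `X`: a ccd such that no ccd has a
second component of smaller depth. -/
def IsCD {A : Type} (Y : DTree A) (Z : ETree A) (X : ETree A) : Prop :=
  IsCCD Y Z X ∧ ∀ (Y' : DTree A) (Z' : ETree A), IsCCD Y' Z' X → ¬ Z'.depth < Z.depth

/-- `(Y, Z)` is a disjunction decomposition (dd) of `X`: a cdd such that no cdd has a
second component of smaller depth. -/
def IsDD {A : Type} (Y : DTree A) (Z : ETree A) (X : ETree A) : Prop :=
  IsCDD Y Z X ∧ ∀ (Y' : DTree A) (Z' : ETree A), IsCDD Y' Z' X → ¬ Z'.depth < Z.depth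
section Aux

variable {A : Type}

namespace ETree

@[simp] lemma hasT_leafT : (leafT : ETree A).hasT ↔ True := Iff.rfl
@[simp] lemma hasT_leafF : (leafF : ETree A).hasT ↔ False := Iff.rfl
@[simp] lemma hasT_node {l r : ETree A} {a : A} :
    (node l a r).hasT ↔ l.hasT ∨ r.hasT := Iff.rfl
@[simp] lemma hasF_leafT : (leafT : ETree A).hasF ↔ False := Iff.rfl
@[simp] lemma hasF_leafF : (leafF : ETree A).hasF ↔ True := Iff.rfl
@[simp] lemma hasF_node {l r : ETree A} {a : A} :
    (node l a r).hasF ↔ l.hasF ∨ r.hasF := Iff.rfl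
@[simp] lemma repl_leafT' {y z : ETree A} : repl leafT y z = y := rfl
@[simp] lemma repl_leafF' {y z : ETree A} : repl leafF y z = z := rfl
@[simp] lemma repl_node' {l r y z : ETree A} {a : A} :
    repl (node l a r) y z = node (repl l y z) a (repl r y z) := rfl
@[simp] lemma depth_leafT : (leafT : ETree A).depth = 0 := rfl
@[simp] lemma depth_leafF : (leafF : ETree A).depth = 0 := rfl
@[simp] lemma depth_node {l r : ETree A} {a : A} :
    (node l a r).depth = 1 + max l.depth r.depth := rfl
@[simp] lemma replTD_leafT : (leafT : ETree A).replTD = DTree.leafD := rfl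
@[simp] lemma replTD_leafF : (leafF : ETree A).replTD = DTree.leafF := rfl
@[simp] lemma replTD_node {l r : ETree A} {a : A} :
    (node l a r).replTD = DTree.node l.replTD a r.replTD := rfl
@[simp] lemma replFD_leafT : (leafT : ETree A).replFD = DTree.leafT := rfl
@[simp] lemma replFD_leafF : (leafF : ETree A).replFD = DTree.leafD := rfl
@[simp] lemma replFD_node {l r : ETree A} {a : A} :
    (node l a r).replFD = DTree.node l.replFD a r.replFD := rfl

lemma hasT_or_hasF : ∀ X : ETree A, X.hasT ∨ X.hasF
  | leafT => Or.inl trivial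
  | leafF => Or.inr trivial
  | node l _ _ => (hasT_or_hasF l).imp Or.inl Or.inl

lemma hasT_repl (X Y Z : ETree A) :
    (repl X Y Z).hasT ↔ (X.hasT ∧ Y.hasT) ∨ (X.hasF ∧ Z.hasT) := by
  induction X with
  | leafT => simp
  | leafF => simp
  | node l a r ihl ihr => simp [ihl, ihr]; tauto

lemma hasF_repl (X Y Z : ETree A) :
    (repl X Y Z).hasF ↔ (X.hasT ∧ Y.hasF) ∨ (X.hasF ∧ Z.hasF) := by
  induction X with
  | leafT => simp
  | leafF => simp
  | node l a r ihl ihr => simp [ihl, ihr]; tauto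

lemma repl_T_of_not_hasF {X : ETree A} (Z : ETree A) (h : ¬ X.hasF) :
    X.repl .leafT Z = X := by
  induction X with
  | leafT => rfl
  | leafF => simp at h
  | node l a r ihl ihr =>
    simp only [hasF_node] at h
    push_neg at h
    simp [ihl h.1, ihr h.2]

lemma repl_F_of_not_hasT {X : ETree A} (Y : ETree A) (h : ¬ X.hasT) :
    X.repl Y .leafF = X := by
  induction X with
  | leafT => simp at h
  | leafF => rfl
  | node l a r ihl ihr =>
    simp only [hasT_node] at h
    push_neg at h
    simp [ihl h.1, ihr h.2]

lemma depth_repl_ge_of_hasT {X : ETree A} (Y Z : ETree A) (h : X.hasT) :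
    Y.depth ≤ (X.repl Y Z).depth := by
  induction X with
  | leafT => simp
  | leafF => simp at h
  | node l a r ihl ihr =>
    simp only [hasT_node] at h
    simp only [repl_node', depth_node]
    rcases h with h | h
    · have := ihl h
      have h2 := Nat.le_max_left (repl l Y Z).depth (repl r Y Z).depth
      omega
    · have := ihr h
      have h2 := Nat.le_max_right (repl l Y Z).depth (repl r Y Z).depth
      omega

lemma depth_repl_ge_of_hasF {X : ETree A} (Y Z : ETree A) (h : X.hasF) :
    Z.depth ≤ (X.repl Y Z).depth := by
  induction X with
  | leafT => simp at h
  | leafF => simp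
  | node l a r ihl ihr =>
    simp only [hasF_node] at h
    simp only [repl_node', depth_node]
    rcases h with h | h
    · have := ihl h
      have h2 := Nat.le_max_left (repl l Y Z).depth (repl r Y Z).depth
      omega
    · have := ihr h
      have h2 := Nat.le_max_right (repl l Y Z).depth (repl r Y Z).depth
      omega

end ETree

namespace DTree

@[simp] lemma hasT_leafT : (leafT : DTree A).hasT ↔ True := Iff.rfl
@[simp] lemma hasT_leafF : (leafF : DTree A).hasT ↔ False := Iff.rfl
@[simp] lemma hasT_leafD : (leafD : DTree A).hasT ↔ False := Iff.rfl
@[simp] lemma hasT_node {l r : DTree A} {a : A} :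
    (node l a r).hasT ↔ l.hasT ∨ r.hasT := Iff.rfl
@[simp] lemma hasF_leafT : (leafT : DTree A).hasF ↔ False := Iff.rfl
@[simp] lemma hasF_leafF : (leafF : DTree A).hasF ↔ True := Iff.rfl
@[simp] lemma hasF_leafD : (leafD : DTree A).hasF ↔ False := Iff.rfl
@[simp] lemma hasF_node {l r : DTree A} {a : A} :
    (node l a r).hasF ↔ l.hasF ∨ r.hasF := Iff.rfl
@[simp] lemma hasD_leafT : (leafT : DTree A).hasD ↔ False := Iff.rfl
@[simp] lemma hasD_leafF : (leafF : DTree A).hasD ↔ False := Iff.rfl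
@[simp] lemma hasD_leafD : (leafD : DTree A).hasD ↔ True := Iff.rfl
@[simp] lemma hasD_node {l r : DTree A} {a : A} :
    (node l a r).hasD ↔ l.hasD ∨ r.hasD := Iff.rfl
@[simp] lemma substD_leafT {z : ETree A} : (leafT : DTree A).substD z = .leafT := rfl
@[simp] lemma substD_leafF {z : ETree A} : (leafF : DTree A).substD z = .leafF := rfl
@[simp] lemma substD_leafD {z : ETree A} : (leafD : DTree A).substD z = z := rfl
@[simp] lemma substD_node {l r : DTree A} {a : A} {z : ETree A} :
    (node l a r).substD z = .node (l.substD z) a (r.substD z) := rfl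

lemma hasT_substD (Y : DTree A) (Z : ETree A) :
    (Y.substD Z).hasT ↔ Y.hasT ∨ (Y.hasD ∧ Z.hasT) := by
  induction Y with
  | leafT => simp
  | leafF => simp
  | leafD => simp
  | node l a r ihl ihr => simp [ihl, ihr]; tauto

lemma hasF_substD (Y : DTree A) (Z : ETree A) :
    (Y.substD Z).hasF ↔ Y.hasF ∨ (Y.hasD ∧ Z.hasF) := by
  induction Y with
  | leafT => simp
  | leafF => simp
  | leafD => simp
  | node l a r ihl ihr => simp [ihl, ihr]; tauto

lemma depth_substD_ge {Y : DTree A} (Z : ETree A) (h : Y.hasD) :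
    Z.depth ≤ (Y.substD Z).depth := by
  induction Y with
  | leafT => simp at h
  | leafF => simp at h
  | leafD => simp
  | node l a r ihl ihr =>
    simp only [hasD_node] at h
    simp only [substD_node, ETree.depth_node]
    rcases h with h | h
    · have := ihl h
      have h2 := Nat.le_max_left (l.substD Z).depth (r.substD Z).depth
      omega
    · have := ihr h
      have h2 := Nat.le_max_right (l.substD Z).depth (r.substD Z).depth
      omega

lemma depth_substD_gt {Y : DTree A} (Z : ETree A) (h : Y.hasD) (hne : Y ≠ leafD) :
    1 + Z.depth ≤ (Y.substD Z).depth := by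
  cases Y with
  | leafT => simp at h
  | leafF => simp at h
  | leafD => exact absurd rfl hne
  | node l a r =>
    simp only [hasD_node] at h
    simp only [substD_node, ETree.depth_node]
    rcases h with h | h
    · have := depth_substD_ge Z h
      have h2 := Nat.le_max_left (l.substD Z).depth (r.substD Z).depth
      omega
    · have := depth_substD_ge Z h
      have h2 := Nat.le_max_right (l.substD Z).depth (r.substD Z).depth
      omega

end DTree

lemma substD_replTD (X Z : ETree A) : (X.replTD).substD Z = X.repl Z .leafF := by
  induction X with
  | leafT => rfl
  | leafF => rfl
  | node l a r ihl ihr => simp [ihl, ihr]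

lemma substD_replFD (X Z : ETree A) : (X.replFD).substD Z = X.repl .leafT Z := by
  induction X with
  | leafT => rfl
  | leafF => rfl
  | node l a r ihl ihr => simp [ihl, ihr]

@[simp] lemma hasD_replTD (X : ETree A) : (X.replTD).hasD ↔ X.hasT := by
  induction X with
  | leafT => simp
  | leafF => simp
  | node l a r ihl ihr => simp [ihl, ihr]

@[simp] lemma hasF_replTD (X : ETree A) : (X.replTD).hasF ↔ X.hasF := by
  induction X with
  | leafT => simp
  | leafF => simp
  | node l a r ihl ihr => simp [ihl, ihr]

@[simp] lemma hasT_replTD (X : ETree A) : ¬ (X.replTD).hasT := by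
  induction X with
  | leafT => simp
  | leafF => simp
  | node l a r ihl ihr => simp [ihl, ihr]

@[simp] lemma hasD_replFD (X : ETree A) : (X.replFD).hasD ↔ X.hasF := by
  induction X with
  | leafT => simp
  | leafF => simp
  | node l a r ihl ihr => simp [ihl, ihr]

@[simp] lemma hasT_replFD (X : ETree A) : (X.replFD).hasT ↔ X.hasT := by
  induction X with
  | leafT => simp
  | leafF => simp
  | node l a r ihl ihr => simp [ihl, ihr]

@[simp] lemma hasF_replFD (X : ETree A) : ¬ (X.replFD).hasF := by
  induction X with
  | leafT => simp
  | leafF => simp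
  | node l a r ihl ihr => simp [ihl, ihr]

end Aux
section Core

variable {A : Type}

open ETree DTree in
lemma eq_leafT_of_repl_eq {W : ETree A} (hW : W.hasT) :
    ∀ X : ETree A, X.repl W .leafF = W → X = .leafT := by
  intro X h
  cases X with
  | leafT => rfl
  | leafF =>
    simp only [ETree.repl_leafF'] at h
    rw [← h] at hW; simp at hW
  | node l a r =>
    by_cases hT : (ETree.node l a r).hasT
    · exfalso
      have hd := congrArg ETree.depth h
      simp only [ETree.repl_node', ETree.depth_node] at hd
      simp only [ETree.hasT_node] at hT
      rcases hT with hT | hT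
      · have h1 := ETree.depth_repl_ge_of_hasT W ETree.leafF hT
        have h2 := Nat.le_max_left (l.repl W .leafF).depth (r.repl W .leafF).depth
        omega
      · have h1 := ETree.depth_repl_ge_of_hasT W ETree.leafF hT
        have h2 := Nat.le_max_right (l.repl W .leafF).depth (r.repl W .leafF).depth
        omega
    · rw [ETree.repl_F_of_not_hasT W hT] at h
      rw [← h] at hW
      exact absurd hW hT

open ETree DTree in
lemma eq_leafF_of_repl_eq {W : ETree A} (hW : W.hasF) :
    ∀ X : ETree A, X.repl .leafT W = W → X = .leafF := by
  intro X h
  cases X with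
  | leafF => rfl
  | leafT =>
    simp only [ETree.repl_leafT'] at h
    rw [← h] at hW; simp at hW
  | node l a r =>
    by_cases hF : (ETree.node l a r).hasF
    · exfalso
      have hd := congrArg ETree.depth h
      simp only [ETree.repl_node', ETree.depth_node] at hd
      simp only [ETree.hasF_node] at hF
      rcases hF with hF | hF
      · have h1 := ETree.depth_repl_ge_of_hasF ETree.leafT W hF
        have h2 := Nat.le_max_left (l.repl .leafT W).depth (r.repl .leafT W).depth
        omega
      · have h1 := ETree.depth_repl_ge_of_hasF ETree.leafT W hF
        have h2 := Nat.le_max_right (l.repl .leafT W).depth (r.repl .leafT W).depth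
        omega
    · rw [ETree.repl_T_of_not_hasF W hF] at h
      rw [← h] at hW
      exact absurd hW hF

lemma repl_inj_T {W : ETree A} (hW : W.hasT) :
    ∀ X X' : ETree A, X.repl W .leafF = X'.repl W .leafF → X = X' := by
  intro X
  induction X with
  | leafT =>
    intro X' h
    simp only [ETree.repl_leafT'] at h
    exact (eq_leafT_of_repl_eq hW X' h.symm).symm
  | leafF =>
    intro X' h
    cases X' with
    | leafF => rfl
    | leafT =>
      simp only [ETree.repl_leafT', ETree.repl_leafF'] at h
      rw [← h] at hW; simp at hW
    | node l' a' r' => simp at h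
  | node l a r ihl ihr =>
    intro X' h
    cases X' with
    | leafT =>
      simp only [ETree.repl_leafT'] at h
      have := eq_leafT_of_repl_eq hW _ h
      simp at this
    | leafF => simp at h
    | node l' a' r' =>
      simp only [ETree.repl_node'] at h
      injection h with h1 h2 h3
      rw [ihl l' h1, h2, ihr r' h3]

lemma repl_inj_F {W : ETree A} (hW : W.hasF) :
    ∀ X X' : ETree A, X.repl .leafT W = X'.repl .leafT W → X = X' := by
  intro X
  induction X with
  | leafF =>
    intro X' h
    simp only [ETree.repl_leafF'] at h
    exact (eq_leafF_of_repl_eq hW X' h.symm).symm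
  | leafT =>
    intro X' h
    cases X' with
    | leafT => rfl
    | leafF =>
      simp only [ETree.repl_leafT', ETree.repl_leafF'] at h
      rw [← h] at hW; simp at hW
    | node l' a' r' => simp at h
  | node l a r ihl ihr =>
    intro X' h
    cases X' with
    | leafF =>
      simp only [ETree.repl_leafF'] at h
      have := eq_leafF_of_repl_eq hW _ h
      simp at this
    | leafT => simp at h
    | node l' a' r' =>
      simp only [ETree.repl_node'] at h
      injection h with h1 h2 h3
      rw [ihl l' h1, h2, ihr r' h3]

/-- Key depth bounds for candidate conjunction-style decompositions of `S[T↦W]`. -/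
lemma NC_and {W : ETree A} (hWT : W.hasT) (hWF : W.hasF) :
    ∀ (S : ETree A) (Y : DTree A) (Z : ETree A),
      S.repl W .leafF = Y.substD Z → ¬ Y.hasF → Z.hasT → Z.hasF →
      (S.hasF → W.depth ≤ Z.depth) ∧ (Y.hasT → 1 + Z.depth ≤ W.depth) := by
  intro S
  induction S with
  | leafT =>
    intro Y Z h hYF hZT hZF
    simp only [ETree.repl_leafT'] at h
    refine ⟨by simp, fun hYT => ?_⟩
    have hYD : Y.hasD := by
      rcases (DTree.hasF_substD Y Z).mp (h ▸ hWF) with h1 | h2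
      · exact absurd h1 hYF
      · exact h2.1
    have hne : Y ≠ .leafD := by rintro rfl; simp at hYT
    have hgt := DTree.depth_substD_gt Z hYD hne
    rw [← h] at hgt
    omega
  | leafF =>
    intro Y Z h hYF hZT hZF
    exfalso
    simp only [ETree.repl_leafF'] at h
    cases Y with
    | leafT => simp at h
    | leafF => exact hYF trivial
    | leafD => simp only [DTree.substD_leafD] at h; rw [← h] at hZT; simp at hZT
    | node l b r => simp at h
  | node l a r ihl ihr =>
    intro Y Z h hYF hZT hZF
    cases Y with
    | leafT => simp at h
    | leafF => exact absurd trivial hYF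
    | leafD =>
      simp only [DTree.substD_leafD] at h
      refine ⟨fun _ => ?_, fun hYT => by simp at hYT⟩
      have hST : l.hasT ∨ r.hasT := by
        have hzt := hZT
        rw [← h] at hzt
        rcases (ETree.hasT_repl _ _ _).mp hzt with h1 | h1
        · simpa using h1.1
        · simp at h1
      have hd : Z.depth = 1 + max (l.repl W .leafF).depth (r.repl W .leafF).depth := by
        rw [← h]; rfl
      rcases hST with hT | hT
      · have h1 := ETree.depth_repl_ge_of_hasT W ETree.leafF hT
        have h2 := Nat.le_max_left (l.repl W .leafF).depth (r.repl W .leafF).depth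
        omega
      · have h1 := ETree.depth_repl_ge_of_hasT W ETree.leafF hT
        have h2 := Nat.le_max_right (l.repl W .leafF).depth (r.repl W .leafF).depth
        omega
    | node Y1 b Y2 =>
      simp only [ETree.repl_node', DTree.substD_node] at h
      injection h with h1 h2 h3
      simp only [DTree.hasF_node] at hYF
      push_neg at hYF
      obtain ⟨al, bl⟩ := ihl Y1 Z h1 hYF.1 hZT hZF
      obtain ⟨ar, br⟩ := ihr Y2 Z h3 hYF.2 hZT hZF
      constructor
      · intro hSF
        rcases (ETree.hasF_node).mp hSF with h' | h'
        · exact al h'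
        · exact ar h'
      · intro hYT
        rcases (DTree.hasT_node).mp hYT with h' | h'
        · exact bl h'
        · exact br h'

/-- Key depth bounds for candidate disjunction-style decompositions of `S[F↦W]`. -/
lemma NC_or {W : ETree A} (hWT : W.hasT) (hWF : W.hasF) :
    ∀ (S : ETree A) (Y : DTree A) (Z : ETree A),
      S.repl .leafT W = Y.substD Z → ¬ Y.hasT → Z.hasT → Z.hasF →
      (S.hasT → W.depth ≤ Z.depth) ∧ (Y.hasF → 1 + Z.depth ≤ W.depth) := by
  intro S
  induction S with
  | leafF =>
    intro Y Z h hYT hZT hZF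
    simp only [ETree.repl_leafF'] at h
    refine ⟨by simp, fun hYF => ?_⟩
    have hYD : Y.hasD := by
      rcases (DTree.hasT_substD Y Z).mp (h ▸ hWT) with h1 | h2
      · exact absurd h1 hYT
      · exact h2.1
    have hne : Y ≠ .leafD := by rintro rfl; simp at hYF
    have hgt := DTree.depth_substD_gt Z hYD hne
    rw [← h] at hgt
    omega
  | leafT =>
    intro Y Z h hYT hZT hZF
    exfalso
    simp only [ETree.repl_leafT'] at h
    cases Y with
    | leafF => simp at h
    | leafT => exact hYT trivial
    | leafD => simp only [DTree.substD_leafD] at h; rw [← h] at hZF; simp at hZF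
    | node l b r => simp at h
  | node l a r ihl ihr =>
    intro Y Z h hYT hZT hZF
    cases Y with
    | leafF => simp at h
    | leafT => exact absurd trivial hYT
    | leafD =>
      simp only [DTree.substD_leafD] at h
      refine ⟨fun _ => ?_, fun hYF => by simp at hYF⟩
      have hSF : l.hasF ∨ r.hasF := by
        have hzf := hZF
        rw [← h] at hzf
        rcases (ETree.hasF_repl _ _ _).mp hzf with h1 | h1
        · simp at h1
        · simpa using h1.1
      have hd : Z.depth = 1 + max (l.repl .leafT W).depth (r.repl .leafT W).depth := by
        rw [← h]; rfl
      rcases hSF with hF | hF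
      · have h1 := ETree.depth_repl_ge_of_hasF ETree.leafT W hF
        have h2 := Nat.le_max_left (l.repl .leafT W).depth (r.repl .leafT W).depth
        omega
      · have h1 := ETree.depth_repl_ge_of_hasF ETree.leafT W hF
        have h2 := Nat.le_max_right (l.repl .leafT W).depth (r.repl .leafT W).depth
        omega
    | node Y1 b Y2 =>
      simp only [ETree.repl_node', DTree.substD_node] at h
      injection h with h1 h2 h3
      simp only [DTree.hasT_node] at hYT
      push_neg at hYT
      obtain ⟨al, bl⟩ := ihl Y1 Z h1 hYT.1 hZT hZF
      obtain ⟨ar, br⟩ := ihr Y2 Z h3 hYT.2 hZT hZF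
      constructor
      · intro hST
        rcases (ETree.hasT_node).mp hST with h' | h'
        · exact al h'
        · exact ar h'
      · intro hYF
        rcases (DTree.hasF_node).mp hYF with h' | h'
        · exact bl h'
        · exact br h'

end Core
section Rigid

variable {A : Type}

/-- `W` admits no nontrivial conjunction-style decomposition. -/
def RigidC (W : ETree A) : Prop :=
  ∀ (Y : DTree A) (Z : ETree A), W = Y.substD Z → ¬ Y.hasT → Y.hasD → Z.hasT → Z.hasF →
    Y = .leafD

/-- `W` admits no nontrivial disjunction-style decomposition. -/
def RigidD (W : ETree A) : Prop :=
  ∀ (Y : DTree A) (Z : ETree A), W = Y.substD Z → ¬ Y.hasF → Y.hasD → Z.hasT → Z.hasF →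
    Y = .leafD

/-- Every ccd-style decomposition of `S[T↦W]` is either deep or canonical. -/
lemma MG_and {W : ETree A} (hR : RigidC W) (hWT : W.hasT) (hWF : W.hasF) :
    ∀ (S : ETree A) (Y : DTree A) (Z : ETree A),
      S.repl W .leafF = Y.substD Z → ¬ Y.hasT → Z.hasT → Z.hasF →
      W.depth < Z.depth ∨ (Y = S.replTD ∧ (Y.hasD → Z = W)) := by
  intro S
  induction S with
  | leafT =>
    intro Y Z h hYT hZT hZF
    simp only [ETree.repl_leafT'] at h
    have hYD : Y.hasD := by
      rcases (DTree.hasT_substD Y Z).mp (h ▸ hWT) with h1 | h2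
      · exact absurd h1 hYT
      · exact h2.1
    have hld : Y = .leafD := hR Y Z h hYT hYD hZT hZF
    subst hld
    simp only [DTree.substD_leafD] at h
    exact Or.inr ⟨by simp, fun _ => h.symm⟩
  | leafF =>
    intro Y Z h hYT hZT hZF
    simp only [ETree.repl_leafF'] at h
    cases Y with
    | leafF => exact Or.inr ⟨by simp, by simp⟩
    | leafT => simp at h
    | leafD =>
      simp only [DTree.substD_leafD] at h
      rw [← h] at hZT; simp at hZT
    | node l b r => simp at h
  | node l a r ihl ihr =>
    intro Y Z h hYT hZT hZF
    cases Y with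
    | leafT => exact absurd trivial hYT
    | leafF => simp at h
    | leafD =>
      left
      simp only [DTree.substD_leafD] at h
      have hST : l.hasT ∨ r.hasT := by
        have hzt := hZT
        rw [← h] at hzt
        rcases (ETree.hasT_repl _ _ _).mp hzt with h1 | h1
        · simpa using h1.1
        · simp at h1
      have hd : Z.depth = 1 + max (l.repl W .leafF).depth (r.repl W .leafF).depth := by
        rw [← h]; rfl
      rcases hST with hT | hT
      · have h1 := ETree.depth_repl_ge_of_hasT W ETree.leafF hT
        have h2 := Nat.le_max_left (l.repl W .leafF).depth (r.repl W .leafF).depth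
        omega
      · have h1 := ETree.depth_repl_ge_of_hasT W ETree.leafF hT
        have h2 := Nat.le_max_right (l.repl W .leafF).depth (r.repl W .leafF).depth
        omega
    | node Y1 b Y2 =>
      simp only [ETree.repl_node', DTree.substD_node] at h
      injection h with h1 h2 h3
      simp only [DTree.hasT_node] at hYT
      push_neg at hYT
      rcases ihl Y1 Z h1 hYT.1 hZT hZF with hd | ⟨e1, f1⟩
      · exact Or.inl hd
      rcases ihr Y2 Z h3 hYT.2 hZT hZF with hd | ⟨e2, f2⟩
      · exact Or.inl hd
      right
      refine ⟨by simp [e1, e2, h2], fun hD => ?_⟩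
      rcases (DTree.hasD_node).mp hD with h' | h'
      · exact f1 h'
      · exact f2 h'

/-- Every cdd-style decomposition of `S[F↦W]` is either deep or canonical. -/
lemma MG_or {W : ETree A} (hR : RigidD W) (hWT : W.hasT) (hWF : W.hasF) :
    ∀ (S : ETree A) (Y : DTree A) (Z : ETree A),
      S.repl .leafT W = Y.substD Z → ¬ Y.hasF → Z.hasT → Z.hasF →
      W.depth < Z.depth ∨ (Y = S.replFD ∧ (Y.hasD → Z = W)) := by
  intro S
  induction S with
  | leafF =>
    intro Y Z h hYF hZT hZF
    simp only [ETree.repl_leafF'] at h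
    have hYD : Y.hasD := by
      rcases (DTree.hasF_substD Y Z).mp (h ▸ hWF) with h1 | h2
      · exact absurd h1 hYF
      · exact h2.1
    have hld : Y = .leafD := hR Y Z h hYF hYD hZT hZF
    subst hld
    simp only [DTree.substD_leafD] at h
    exact Or.inr ⟨by simp, fun _ => h.symm⟩
  | leafT =>
    intro Y Z h hYF hZT hZF
    simp only [ETree.repl_leafT'] at h
    cases Y with
    | leafT => exact Or.inr ⟨by simp, by simp⟩
    | leafF => simp at h
    | leafD =>
      simp only [DTree.substD_leafD] at h
      rw [← h] at hZF; simp at hZF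
    | node l b r => simp at h
  | node l a r ihl ihr =>
    intro Y Z h hYF hZT hZF
    cases Y with
    | leafF => exact absurd trivial hYF
    | leafT => simp at h
    | leafD =>
      left
      simp only [DTree.substD_leafD] at h
      have hSF : l.hasF ∨ r.hasF := by
        have hzf := hZF
        rw [← h] at hzf
        rcases (ETree.hasF_repl _ _ _).mp hzf with h1 | h1
        · simp at h1
        · simpa using h1.1
      have hd : Z.depth = 1 + max (l.repl .leafT W).depth (r.repl .leafT W).depth := by
        rw [← h]; rfl
      rcases hSF with hF | hF
      · have h1 := ETree.depth_repl_ge_of_hasF ETree.leafT W hF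
        have h2 := Nat.le_max_left (l.repl .leafT W).depth (r.repl .leafT W).depth
        omega
      · have h1 := ETree.depth_repl_ge_of_hasF ETree.leafT W hF
        have h2 := Nat.le_max_right (l.repl .leafT W).depth (r.repl .leafT W).depth
        omega
    | node Y1 b Y2 =>
      simp only [ETree.repl_node', DTree.substD_node] at h
      injection h with h1 h2 h3
      simp only [DTree.hasF_node] at hYF
      push_neg at hYF
      rcases ihl Y1 Z h1 hYF.1 hZT hZF with hd | ⟨e1, f1⟩
      · exact Or.inl hd
      rcases ihr Y2 Z h3 hYF.2 hZT hZF with hd | ⟨e2, f2⟩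
      · exact Or.inl hd
      right
      refine ⟨by simp [e1, e2, h2], fun hD => ?_⟩
      rcases (DTree.hasD_node).mp hD with h' | h'
      · exact f1 h'
      · exact f2 h'

/-- A decomposition of `S[T↦W]` with an all-`△` context descends to `S`. -/
lemma ALLD_and {W : ETree A} (hR : RigidC W) (hWT : W.hasT) (hWF : W.hasF) :
    ∀ (S : ETree A) (Y : DTree A) (Z : ETree A),
      S.repl W .leafF = Y.substD Z → ¬ Y.hasT → ¬ Y.hasF → Z.hasT → Z.hasF →
      ∃ (Ys : DTree A) (Zs : ETree A), S = Ys.substD Zs ∧ ¬ Ys.hasT ∧ ¬ Ys.hasF ∧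
        (Y.hasD ↔ Ys.hasD) ∧ Z = Zs.repl W .leafF := by
  intro S
  induction S with
  | leafT =>
    intro Y Z h hYT hYF hZT hZF
    simp only [ETree.repl_leafT'] at h
    have hYD : Y.hasD := by
      rcases (DTree.hasT_substD Y Z).mp (h ▸ hWT) with h1 | h2
      · exact absurd h1 hYT
      · exact h2.1
    have hld : Y = .leafD := hR Y Z h hYT hYD hZT hZF
    subst hld
    simp only [DTree.substD_leafD] at h
    exact ⟨.leafD, .leafT, by simp, by simp, by simp, by simp, by simpa using h.symm⟩
  | leafF =>
    intro Y Z h hYT hYF hZT hZF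
    exfalso
    simp only [ETree.repl_leafF'] at h
    cases Y with
    | leafT => simp at h
    | leafF => exact hYF trivial
    | leafD => simp only [DTree.substD_leafD] at h; rw [← h] at hZT; simp at hZT
    | node l b r => simp at h
  | node l a r ihl ihr =>
    intro Y Z h hYT hYF hZT hZF
    cases Y with
    | leafT => exact absurd trivial hYT
    | leafF => exact absurd trivial hYF
    | leafD =>
      simp only [DTree.substD_leafD] at h
      exact ⟨.leafD, .node l a r, by simp, by simp, by simp, by simp, h.symm⟩
    | node Y1 b Y2 =>
      simp only [ETree.repl_node', DTree.substD_node] at h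
      injection h with h1 h2 h3
      simp only [DTree.hasT_node] at hYT
      simp only [DTree.hasF_node] at hYF
      push_neg at hYT
      push_neg at hYF
      obtain ⟨Ys1, Zs1, e1, t1, f1, d1, z1⟩ := ihl Y1 Z h1 hYT.1 hYF.1 hZT hZF
      obtain ⟨Ys2, Zs2, e2, t2, f2, d2, z2⟩ := ihr Y2 Z h3 hYT.2 hYF.2 hZT hZF
      have hzz : Zs1 = Zs2 := repl_inj_T hWT _ _ (z1.symm.trans z2)
      subst hzz
      refine ⟨.node Ys1 a Ys2, Zs1, ?_, ?_, ?_, ?_, z1⟩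
      · simp [e1, e2]
      · simp [t1, t2]
      · simp [f1, f2]
      · subst h2; simp [d1, d2]

/-- A decomposition of `S[F↦W]` with an all-`△` context descends to `S`. -/
lemma ALLD_or {W : ETree A} (hR : RigidD W) (hWT : W.hasT) (hWF : W.hasF) :
    ∀ (S : ETree A) (Y : DTree A) (Z : ETree A),
      S.repl .leafT W = Y.substD Z → ¬ Y.hasT → ¬ Y.hasF → Z.hasT → Z.hasF →
      ∃ (Ys : DTree A) (Zs : ETree A), S = Ys.substD Zs ∧ ¬ Ys.hasT ∧ ¬ Ys.hasF ∧
        (Y.hasD ↔ Ys.hasD) ∧ Z = Zs.repl .leafT W := by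
  intro S
  induction S with
  | leafF =>
    intro Y Z h hYT hYF hZT hZF
    simp only [ETree.repl_leafF'] at h
    have hYD : Y.hasD := by
      rcases (DTree.hasF_substD Y Z).mp (h ▸ hWF) with h1 | h2
      · exact absurd h1 hYF
      · exact h2.1
    have hld : Y = .leafD := hR Y Z h hYF hYD hZT hZF
    subst hld
    simp only [DTree.substD_leafD] at h
    exact ⟨.leafD, .leafF, by simp, by simp, by simp, by simp, by simpa using h.symm⟩
  | leafT =>
    intro Y Z h hYT hYF hZT hZF
    exfalso
    simp only [ETree.repl_leafT'] at h
    cases Y with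
    | leafF => simp at h
    | leafT => exact hYT trivial
    | leafD => simp only [DTree.substD_leafD] at h; rw [← h] at hZF; simp at hZF
    | node l b r => simp at h
  | node l a r ihl ihr =>
    intro Y Z h hYT hYF hZT hZF
    cases Y with
    | leafT => exact absurd trivial hYT
    | leafF => exact absurd trivial hYF
    | leafD =>
      simp only [DTree.substD_leafD] at h
      exact ⟨.leafD, .node l a r, by simp, by simp, by simp, by simp, h.symm⟩
    | node Y1 b Y2 =>
      simp only [ETree.repl_node', DTree.substD_node] at h
      injection h with h1 h2 h3
      simp only [DTree.hasT_node] at hYT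
      simp only [DTree.hasF_node] at hYF
      push_neg at hYT
      push_neg at hYF
      obtain ⟨Ys1, Zs1, e1, t1, f1, d1, z1⟩ := ihl Y1 Z h1 hYT.1 hYF.1 hZT hZF
      obtain ⟨Ys2, Zs2, e2, t2, f2, d2, z2⟩ := ihr Y2 Z h3 hYT.2 hYF.2 hZT hZF
      have hzz : Zs1 = Zs2 := repl_inj_F hWF _ _ (z1.symm.trans z2)
      subst hzz
      refine ⟨.node Ys1 a Ys2, Zs1, ?_, ?_, ?_, ?_, z1⟩
      · simp [e1, e2]
      · simp [t1, t2]
      · simp [f1, f2]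
      · subst h2; simp [d1, d2]

end Rigid
section Grammar

variable {A : Type}

lemma IsTTerm.se_not_hasF {P : STerm A} (h : IsTTerm P) : ¬ (se P).hasF := by
  induction h with
  | tt => simp [se]
  | node a hP hQ ihP ihQ =>
    simp only [se, ETree.repl_node', ETree.repl_leafT', ETree.repl_leafF']
    rw [ETree.repl_T_of_not_hasF _ ihP]
    simp [ihP, ihQ]

lemma IsFTerm.se_not_hasT {P : STerm A} (h : IsFTerm P) : ¬ (se P).hasT := by
  induction h with
  | ff => simp [se]
  | node a hP hQ ihP ihQ =>
    simp only [se, ETree.repl_node', ETree.repl_leafT', ETree.repl_leafF']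
    rw [ETree.repl_F_of_not_hasT _ ihP]
    simp [ihP, ihQ]

lemma se_lterm_pos {a : A} {P Q : STerm A} (hP : IsTTerm P) (hQ : IsFTerm Q) :
    se (.or (.and (.atom a) P) Q) = .node (se P) a (se Q) := by
  simp only [se, ETree.repl_node', ETree.repl_leafT', ETree.repl_leafF']
  rw [ETree.repl_T_of_not_hasF _ hP.se_not_hasF]

lemma se_lterm_neg {a : A} {P Q : STerm A} (hP : IsTTerm P) (hQ : IsFTerm Q) :
    se (.or (.and (.neg (.atom a)) P) Q) = .node (se Q) a (se P) := by
  simp only [se, ETree.repl_node', ETree.repl_leafT', ETree.repl_leafF']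
  rw [ETree.repl_T_of_not_hasF _ hP.se_not_hasF]

lemma IsLTerm.se_shape {P : STerm A} (h : IsLTerm P) :
    ∃ (a : A) (U V : ETree A), se P = .node U a V ∧
      ((¬ U.hasF ∧ ¬ V.hasT) ∨ (¬ U.hasT ∧ ¬ V.hasF)) := by
  cases h with
  | pos a hT hF =>
    exact ⟨a, se _, se _, se_lterm_pos hT hF, Or.inl ⟨hT.se_not_hasF, hF.se_not_hasT⟩⟩
  | neg a hT hF =>
    exact ⟨a, se _, se _, se_lterm_neg hT hF, Or.inr ⟨hF.se_not_hasT, hT.se_not_hasF⟩⟩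

lemma shape_hasTF {U V : ETree A} {a : A}
    (hor : (¬ U.hasF ∧ ¬ V.hasT) ∨ (¬ U.hasT ∧ ¬ V.hasF)) :
    (ETree.node U a V).hasT ∧ (ETree.node U a V).hasF := by
  rcases hor with ⟨hUF, hVT⟩ | ⟨hUT, hVF⟩
  · exact ⟨Or.inl ((ETree.hasT_or_hasF U).resolve_right hUF),
      Or.inr ((ETree.hasT_or_hasF V).resolve_left hVT)⟩
  · exact ⟨Or.inr ((ETree.hasT_or_hasF V).resolve_right hVF),
      Or.inl ((ETree.hasT_or_hasF U).resolve_left hUT)⟩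

lemma star_se_hasTF : ∀ P : STerm A, IsStarTerm P → (se P).hasT ∧ (se P).hasF := by
  intro P
  induction P with
  | atom a =>
    intro h
    exfalso
    cases h with
    | c hc => cases hc with | ell hl => cases hl
    | d hd => cases hd with | ell hl => cases hl
  | tt =>
    intro h
    exfalso
    cases h with
    | c hc => cases hc with | ell hl => cases hl
    | d hd => cases hd with | ell hl => cases hl
  | ff =>
    intro h
    exfalso
    cases h with
    | c hc => cases hc with | ell hl => cases hl
    | d hd => cases hd with | ell hl => cases hl
  | neg P ih =>
    intro h
    exfalso
    cases h with
    | c hc => cases hc with | ell hl => cases hl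
    | d hd => cases hd with | ell hl => cases hl
  | and P1 P2 ih1 ih2 =>
    intro h
    have h' : IsLTerm (.and P1 P2) ∨ (IsStarTerm P1 ∧ IsDTerm P2) := by
      cases h with
      | c hc =>
        cases hc with
        | ell hl => exact Or.inl hl
        | and hs hd => exact Or.inr ⟨hs, hd⟩
      | d hd => cases hd with | ell hl => exact Or.inl hl
    rcases h' with hl | ⟨hs, hd⟩
    · cases hl
    · obtain ⟨hT1, hF1⟩ := ih1 hs
      obtain ⟨hT2, hF2⟩ := ih2 (IsStarTerm.d hd)
      constructor
      · show ((se P1).repl (se P2) .leafF).hasT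
        rw [ETree.hasT_repl]
        exact Or.inl ⟨hT1, hT2⟩
      · show ((se P1).repl (se P2) .leafF).hasF
        rw [ETree.hasF_repl]
        exact Or.inr ⟨hF1, trivial⟩
  | or P1 P2 ih1 ih2 =>
    intro h
    have h' : IsLTerm (.or P1 P2) ∨ (IsStarTerm P1 ∧ IsCTerm P2) := by
      cases h with
      | c hc => cases hc with | ell hl => exact Or.inl hl
      | d hd =>
        cases hd with
        | ell hl => exact Or.inl hl
        | or hs hc => exact Or.inr ⟨hs, hc⟩
    rcases h' with hl | ⟨hs, hc⟩
    · obtain ⟨a, U, V, hsh, hor⟩ := hl.se_shape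
      rw [hsh]
      exact shape_hasTF hor
    · obtain ⟨hT1, hF1⟩ := ih1 hs
      obtain ⟨hT2, hF2⟩ := ih2 (IsStarTerm.c hc)
      constructor
      · show ((se P1).repl .leafT (se P2)).hasT
        rw [ETree.hasT_repl]
        exact Or.inl ⟨hT1, trivial⟩
      · show ((se P1).repl .leafT (se P2)).hasF
        rw [ETree.hasF_repl]
        exact Or.inr ⟨hF1, hF2⟩

lemma rigid_of_shape {U V : ETree A} {a : A}
    (hor : (¬ U.hasF ∧ ¬ V.hasT) ∨ (¬ U.hasT ∧ ¬ V.hasF)) :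
    RigidC (ETree.node U a V) ∧ RigidD (ETree.node U a V) := by
  have key : ∀ (Y : DTree A) (Z : ETree A), ETree.node U a V = Y.substD Z →
      Y.hasD → Z.hasT → Z.hasF → Y = .leafD := by
    intro Y Z h hD hZT hZF
    cases Y with
    | leafT => simp at h
    | leafF => simp at h
    | leafD => rfl
    | node Y1 b Y2 =>
      exfalso
      simp only [DTree.substD_node] at h
      injection h with h1 h2 h3
      rcases hor with ⟨hUF, hVT⟩ | ⟨hUT, hVF⟩
      · have nd1 : ¬ Y1.hasD := by
          intro hd
          have : (Y1.substD Z).hasF := (DTree.hasF_substD _ _).mpr (Or.inr ⟨hd, hZF⟩)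
          rw [← h1] at this
          exact hUF this
        have nd2 : ¬ Y2.hasD := by
          intro hd
          have : (Y2.substD Z).hasT := (DTree.hasT_substD _ _).mpr (Or.inr ⟨hd, hZT⟩)
          rw [← h3] at this
          exact hVT this
        rcases (DTree.hasD_node).mp hD with h' | h'
        · exact nd1 h'
        · exact nd2 h'
      · have nd1 : ¬ Y1.hasD := by
          intro hd
          have : (Y1.substD Z).hasT := (DTree.hasT_substD _ _).mpr (Or.inr ⟨hd, hZT⟩)
          rw [← h1] at this
          exact hUT this
        have nd2 : ¬ Y2.hasD := by
          intro hd
          have : (Y2.substD Z).hasF := (DTree.hasF_substD _ _).mpr (Or.inr ⟨hd, hZF⟩)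
          rw [← h3] at this
          exact hVF this
        rcases (DTree.hasD_node).mp hD with h' | h'
        · exact nd1 h'
        · exact nd2 h'
  exact ⟨fun Y Z h _ hD hZT hZF => key Y Z h hD hZT hZF,
         fun Y Z h _ hD hZT hZF => key Y Z h hD hZT hZF⟩

lemma rigid_gram : ∀ Q : STerm A, (IsDTerm Q → RigidC (se Q)) ∧ (IsCTerm Q → RigidD (se Q)) := by
  intro Q
  induction Q with
  | atom a =>
    constructor
    · intro h; cases h with | ell hl => cases hl
    · intro h; cases h with | ell hl => cases hl
  | tt =>
    constructor
    · intro h; cases h with | ell hl => cases hl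
    · intro h; cases h with | ell hl => cases hl
  | ff =>
    constructor
    · intro h; cases h with | ell hl => cases hl
    · intro h; cases h with | ell hl => cases hl
  | neg P ih =>
    constructor
    · intro h; cases h with | ell hl => cases hl
    · intro h; cases h with | ell hl => cases hl
  | and P1 P2 ih1 ih2 =>
    constructor
    · intro h; cases h with | ell hl => cases hl
    · intro h
      cases h with
      | ell hl => cases hl
      | and hs hd =>
        intro Y Z heq hYF hYD hZT hZF
        by_contra hne
        obtain ⟨hPT, hPF⟩ := star_se_hasTF P1 hs
        obtain ⟨hQT, hQF⟩ := star_se_hasTF P2 (IsStarTerm.d hd)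
        have heq' : (se P1).repl (se P2) .leafF = Y.substD Z := heq
        by_cases hYT : Y.hasT
        · obtain ⟨c1, c2⟩ := NC_and hQT hQF (se P1) Y Z heq' hYF hZT hZF
          have e1 := c1 hPF
          have e2 := c2 hYT
          omega
        · obtain ⟨Ys, Zs, eS, tS, fS, dS, zS⟩ :=
            ALLD_and (ih2.1 hd) hQT hQF (se P1) Y Z heq' hYT hYF hZT hZF
          have hYsD : Ys.hasD := dS.mp hYD
          have hZsT : Zs.hasT := by
            rcases (DTree.hasT_substD Ys Zs).mp (eS ▸ hPT) with h1 | h1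
            · exact absurd h1 tS
            · exact h1.2
          have hZsF : Zs.hasF := by
            rcases (DTree.hasF_substD Ys Zs).mp (eS ▸ hPF) with h1 | h1
            · exact absurd h1 fS
            · exact h1.2
          have hld : Ys = .leafD := by
            cases hs with
            | c hc => exact (ih1.2 hc) Ys Zs eS fS hYsD hZsT hZsF
            | d hd' => exact (ih1.1 hd') Ys Zs eS tS hYsD hZsT hZsF
          subst hld
          simp only [DTree.substD_leafD] at eS
          subst eS
          have hdep : (Y.substD Z).depth = Z.depth := by rw [← heq', ← zS]
          have hgt := DTree.depth_substD_gt Z hYD hne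
          omega
  | or P1 P2 ih1 ih2 =>
    constructor
    · intro h
      cases h with
      | ell hl =>
        obtain ⟨a, U, V, hsh, hor⟩ := hl.se_shape
        rw [hsh]
        exact (rigid_of_shape hor).1
      | or hs hc =>
        intro Y Z heq hYT hYD hZT hZF
        by_contra hne
        obtain ⟨hPT, hPF⟩ := star_se_hasTF P1 hs
        obtain ⟨hQT, hQF⟩ := star_se_hasTF P2 (IsStarTerm.c hc)
        have heq' : (se P1).repl .leafT (se P2) = Y.substD Z := heq
        by_cases hYF : Y.hasF
        · obtain ⟨c1, c2⟩ := NC_or hQT hQF (se P1) Y Z heq' hYT hZT hZF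
          have e1 := c1 hPT
          have e2 := c2 hYF
          omega
        · obtain ⟨Ys, Zs, eS, tS, fS, dS, zS⟩ :=
            ALLD_or (ih2.2 hc) hQT hQF (se P1) Y Z heq' hYT hYF hZT hZF
          have hYsD : Ys.hasD := dS.mp hYD
          have hZsT : Zs.hasT := by
            rcases (DTree.hasT_substD Ys Zs).mp (eS ▸ hPT) with h1 | h1
            · exact absurd h1 tS
            · exact h1.2
          have hZsF : Zs.hasF := by
            rcases (DTree.hasF_substD Ys Zs).mp (eS ▸ hPF) with h1 | h1
            · exact absurd h1 fS
            · exact h1.2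
          have hld : Ys = .leafD := by
            cases hs with
            | c hc' => exact (ih1.2 hc') Ys Zs eS fS hYsD hZsT hZsF
            | d hd' => exact (ih1.1 hd') Ys Zs eS tS hYsD hZsT hZsF
          subst hld
          simp only [DTree.substD_leafD] at eS
          subst eS
          have hdep : (Y.substD Z).depth = Z.depth := by rw [← heq', ← zS]
          have hgt := DTree.depth_substD_gt Z hYD hne
          omega
    · intro h
      cases h with
      | ell hl =>
        obtain ⟨a, U, V, hsh, hor⟩ := hl.se_shape
        rw [hsh]
        exact (rigid_of_shape hor).2


end Grammar

/-- For a *-term `P ∧❛ Q`, `se(P ∧❛ Q)` has the unique cd `(se(P)[T↦△], se(Q))` and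
no dd; for a *-term `P ∨❛ Q`, `se(P ∨❛ Q)` has no cd and the unique dd
`(se(P)[F↦△], se(Q))`. -/
theorem cd_dd_unique {A : Type} [Nonempty A] :
    (∀ P Q : STerm A, IsStarTerm P → IsDTerm Q →
      (∀ (Y : DTree A) (Z : ETree A),
        IsCD Y Z (se (.and P Q)) ↔ Y = (se P).replTD ∧ Z = se Q) ∧
      ¬ ∃ (Y : DTree A) (Z : ETree A), IsDD Y Z (se (.and P Q))) ∧
    (∀ P Q : STerm A, IsStarTerm P → IsCTerm Q →
      (¬ ∃ (Y : DTree A) (Z : ETree A), IsCD Y Z (se (.or P Q))) ∧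
      (∀ (Y : DTree A) (Z : ETree A),
        IsDD Y Z (se (.or P Q)) ↔ Y = (se P).replFD ∧ Z = se Q)) := by
  constructor
  · -- conjunction case
    intro P Q hP hQ
    obtain ⟨hPT, hPF⟩ := star_se_hasTF P hP
    obtain ⟨hQT, hQF⟩ := star_se_hasTF Q (IsStarTerm.d hQ)
    have hR : RigidC (se Q) := (rigid_gram Q).1 hQ
    have hse : se (.and P Q) = (se P).repl (se Q) .leafF := rfl
    have hcanc : IsCCD ((se P).replTD) (se Q) (se (.and P Q)) := by
      refine ⟨?_, ?_, ?_, ?_, hQT, hQF⟩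
      · rw [hse, substD_replTD]
      · simpa using hPT
      · simpa using hPF
      · simp
    constructor
    · intro Y Z
      constructor
      · rintro ⟨⟨heq, hYD, hYF, hYT, hZT, hZF⟩, hmin⟩
        rw [hse] at heq
        rcases MG_and hR hQT hQF (se P) Y Z heq hYT hZT hZF with hd | ⟨e, f⟩
        · exact absurd hd (hmin _ _ hcanc)
        · exact ⟨e, f hYD⟩
      · rintro ⟨rfl, rfl⟩
        refine ⟨hcanc, ?_⟩
        intro Y' Z' hccd
        obtain ⟨heq, hYD, hYF, hYT, hZT, hZF⟩ := hccd
        rw [hse] at heq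
        rcases MG_and hR hQT hQF (se P) Y' Z' heq hYT hZT hZF with hd | ⟨e, f⟩
        · omega
        · rw [f hYD]; omega
    · rintro ⟨Y, Z, ⟨heq, hYD, hYT, hYF, hZT, hZF⟩, -⟩
      rw [hse] at heq
      obtain ⟨c1, c2⟩ := NC_and hQT hQF (se P) Y Z heq hYF hZT hZF
      have e1 := c1 hPF
      have e2 := c2 hYT
      omega
  · -- disjunction case
    intro P Q hP hQ
    obtain ⟨hPT, hPF⟩ := star_se_hasTF P hP
    obtain ⟨hQT, hQF⟩ := star_se_hasTF Q (IsStarTerm.c hQ)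
    have hR : RigidD (se Q) := (rigid_gram Q).2 hQ
    have hse : se (.or P Q) = (se P).repl .leafT (se Q) := rfl
    have hcand : IsCDD ((se P).replFD) (se Q) (se (.or P Q)) := by
      refine ⟨?_, ?_, ?_, ?_, hQT, hQF⟩
      · rw [hse, substD_replFD]
      · simpa using hPF
      · simpa using hPT
      · simp
    constructor
    · rintro ⟨Y, Z, ⟨heq, hYD, hYF, hYT, hZT, hZF⟩, -⟩
      rw [hse] at heq
      obtain ⟨c1, c2⟩ := NC_or hQT hQF (se P) Y Z heq hYT hZT hZF
      have e1 := c1 hPT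
      have e2 := c2 hYF
      omega
    · intro Y Z
      constructor
      · rintro ⟨⟨heq, hYD, hYT, hYF, hZT, hZF⟩, hmin⟩
        rw [hse] at heq
        rcases MG_or hR hQT hQF (se P) Y Z heq hYF hZT hZF with hd | ⟨e, f⟩
        · exact absurd hd (hmin _ _ hcand)
        · exact ⟨e, f hYD⟩
      · rintro ⟨rfl, rfl⟩
        refine ⟨hcand, ?_⟩
        intro Y' Z' hcdd
        obtain ⟨heq, hYD, hYT, hYF, hZT, hZF⟩ := hcdd
        rw [hse] at heq
        rcases MG_or hR hQT hQF (se P) Y' Z' heq hYF hZT hZF with hd | ⟨e, f⟩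
        · omega
        · rw [f hYD]; omega
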